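/- Fix d ≥ 1, define φ_{i,j} := Σ_{r=1}^m y_{r,j} ⊗ x_{r,i} ∈ R ⊗_ℂ S for 1 ≤ i,j ≤ m, and let σ ∈ S_{2d} be the permutation with σ(2r) = 2r+2 for 1 ≤ r ≤ d−1, σ(2d) = 2, and σ(2r−1) = 2r−1 for 1 ≤ r ≤ d. Then t_σ = (1/2^d) Σ_{t_1,…,t_d=1}^m φ_{t_2,t_1} φ_{t_3,t_2} ⋯ φ_{t_d,t_{d−1}} φ_{t_1,t_d}, the product taken in the commutative ring R ⊗_ℂ S. (This is the purely even case n = 0 of the paper's lemma identifying t_σ, for σ a cycle of consecutive even letters, with the top-order symbol of the Gelfand element str(𝐄^d).) -/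

import Mathlib

noncomputable section

open scoped TensorProduct

/-- The polynomial ring ℂ[y_{i,j} : 1 ≤ i ≤ j ≤ m] with the convention y_{i,j} = y_{j,i},
realized as the polynomial ring on variables indexed by unordered pairs from Fin m. -/
abbrev PolyS (m : ℕ) := MvPolynomial (Sym2 (Fin m)) ℂ

/-- For k ∈ {0,…,d−1}, the index 2k ∈ {0,…,2d−1} (0-based version of the 1-based odd index 2k+1). -/
def idx0 (d : ℕ) (k : Fin d) : Fin (2 * d) := ⟨2 * (k : ℕ), by have := k.isLt; omega⟩

/-- For k ∈ {0,…,d−1}, the index 2k+1 ∈ {0,…,2d−1} (0-based version of the 1-based even index 2k+2). -/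
def idx1 (d : ℕ) (k : Fin d) : Fin (2 * d) := ⟨2 * (k : ℕ) + 1, by have := k.isLt; omega⟩

/-- The invariant tensor
`t_σ = 2^{-d} Σ_{i : {1,…,2d} → {1,…,m}} (y_{i_1,i_2} ⋯ y_{i_{2d−1},i_{2d}}) ⊗
(x_{i_{σ(1)},i_{σ(2)}} ⋯ x_{i_{σ(2d−1)},i_{σ(2d)}})` in R ⊗ S (indices written 0-based). -/
def tTen (m d : ℕ) (σ : Equiv.Perm (Fin (2 * d))) : PolyS m ⊗[ℂ] PolyS m :=
  ((1 : ℂ) / 2 ^ d) •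
    ∑ i : Fin (2 * d) → Fin m,
      (∏ k : Fin d, MvPolynomial.X (Sym2.mk (i (idx0 d k)) (i (idx1 d k)))) ⊗ₜ[ℂ]
        (∏ k : Fin d, MvPolynomial.X (Sym2.mk (i (σ (idx0 d k))) (i (σ (idx1 d k)))))

/-- φ_{i,j} = Σ_r y_{r,j} ⊗ x_{r,i} ∈ R ⊗ S. -/
def phiT (m : ℕ) (i j : Fin m) : PolyS m ⊗[ℂ] PolyS m :=
  ∑ r : Fin m,
    (MvPolynomial.X (Sym2.mk r j) : PolyS m) ⊗ₜ[ℂ] (MvPolynomial.X (Sym2.mk r i) : PolyS m)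

lemma prod_tmul_aux {m : ℕ} {ι : Type*} (s : Finset ι) (a b : ι → PolyS m) :
    ∏ i ∈ s, (a i ⊗ₜ[ℂ] b i) = (∏ i ∈ s, a i) ⊗ₜ[ℂ] (∏ i ∈ s, b i) := by
  induction s using Finset.cons_induction with
  | empty => simp [Algebra.TensorProduct.one_def]
  | cons i s hi ih => simp [Finset.prod_cons, ih, Algebra.TensorProduct.tmul_mul_tmul]

def splitEquiv (m d : ℕ) : (Fin (2 * d) → Fin m) ≃ ((Fin d → Fin m) × (Fin d → Fin m)) where
  toFun i := (fun k => i (idx1 d k), fun k => i (idx0 d k))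
  invFun p j :=
    if h : j.val % 2 = 0 then p.2 ⟨j.val / 2, by have := j.isLt; omega⟩
    else p.1 ⟨j.val / 2, by have := j.isLt; omega⟩
  left_inv i := by
    funext j
    by_cases h : j.val % 2 = 0
    · simp only [dif_pos h]
      congr 1
      exact Fin.ext (show 2 * (j.val / 2) = j.val by omega)
    · simp only [dif_neg h]
      congr 1
      exact Fin.ext (show 2 * (j.val / 2) + 1 = j.val by omega)
  right_inv p := by
    apply Prod.ext
    · funext k
      show (if h : (idx1 d k).val % 2 = 0 then _ else _) = p.1 k
      have hv : ((idx1 d k) : ℕ) = 2 * (k : ℕ) + 1 := rfl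
      split
      · next h => omega
      · next h =>
          exact congrArg p.1 (Fin.ext (show ((idx1 d k) : ℕ) / 2 = (k : ℕ) by omega))
    · funext k
      show (if h : (idx0 d k).val % 2 = 0 then _ else _) = p.2 k
      have hv : ((idx0 d k) : ℕ) = 2 * (k : ℕ) := rfl
      split
      · next h =>
          exact congrArg p.2 (Fin.ext (show ((idx0 d k) : ℕ) / 2 = (k : ℕ) by omega))
      · next h => omega

/-!
STATEMENT 11: For the cycle σ = (2, 4, …, 2d) ∈ S_{2d} (1-based; described pointwise below in
0-based indexing: σ(2s+1) = 2s+3 for s+1 < d, σ(2d−1) = 1, σ(2s) = 2s), one has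
t_σ = 2^{−d} Σ_{t : {1,…,d} → {1,…,m}} φ_{t_2,t_1} φ_{t_3,t_2} ⋯ φ_{t_1,t_d} in R ⊗ S.
Here d = e + 1 ≥ 1.
-/

theorem statement11 (m e : ℕ) (σ : Equiv.Perm (Fin (2 * (e + 1))))
    (h1 : ∀ (s : ℕ) (hs : s + 1 < e + 1),
      σ ⟨2 * s + 1, by omega⟩ = ⟨2 * s + 3, by omega⟩)
    (h2 : σ ⟨2 * (e + 1) - 1, by omega⟩ = ⟨1, by omega⟩)
    (h3 : ∀ (s : ℕ) (hs : s < e + 1),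
      σ ⟨2 * s, by omega⟩ = ⟨2 * s, by omega⟩) :
    tTen m (e + 1) σ =
      ((1 : ℂ) / 2 ^ (e + 1)) •
        ∑ t : Fin (e + 1) → Fin m, ∏ s : Fin (e + 1), phiT m (t (s + 1)) (t s) := by
  have hσ0 : ∀ k : Fin (e + 1), σ (idx0 (e + 1) k) = idx0 (e + 1) k := by
    intro k
    have := h3 k.val k.isLt
    simpa [idx0] using this
  have hσ1 : ∀ k : Fin (e + 1), σ (idx1 (e + 1) k) = idx1 (e + 1) (k + 1) := by
    intro k
    by_cases hk : k.val + 1 < e + 1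
    · have h := h1 k.val hk
      have hq : idx1 (e + 1) (k + 1) = ⟨2 * k.val + 3, by omega⟩ := by
        apply Fin.ext
        show 2 * ((k + 1 : Fin (e + 1)) : ℕ) + 1 = 2 * k.val + 3
        rw [Fin.val_add_one_of_lt (by rw [Fin.lt_iff_val_lt_val, Fin.val_last]; omega)]
        omega
      rw [hq]
      exact h
    · have hk' : k.val = e := by have := k.isLt; omega
      have hlast : k = Fin.last e := Fin.ext (by simpa using hk')
      have hq : idx1 (e + 1) (k + 1) = ⟨1, by omega⟩ := by
        apply Fin.ext
        show 2 * ((k + 1 : Fin (e + 1)) : ℕ) + 1 = 1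
        rw [hlast, Fin.last_add_one]
        simp
      have hq2 : idx1 (e + 1) k = ⟨2 * (e + 1) - 1, by omega⟩ := by
        apply Fin.ext
        show 2 * (k : ℕ) + 1 = 2 * (e + 1) - 1
        omega
      rw [hq, hq2, h2]
  have hphi : ∀ t : Fin (e + 1) → Fin m,
      ∏ s : Fin (e + 1), phiT m (t (s + 1)) (t s)
      = ∑ r : Fin (e + 1) → Fin m,
          (∏ s : Fin (e + 1), MvPolynomial.X (Sym2.mk (r s) (t s))) ⊗ₜ[ℂ]
          (∏ s : Fin (e + 1), MvPolynomial.X (Sym2.mk (r s) (t (s + 1)))) := by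
    intro t
    simp only [phiT]
    rw [Finset.prod_univ_sum]
    refine Finset.sum_congr (by simp) fun r _ => ?_
    exact prod_tmul_aux _ _ _
  unfold tTen
  simp_rw [hσ0, hσ1, hphi]
  congr 1
  refine (Fintype.sum_equiv (splitEquiv m (e + 1)) _
    (fun p => (∏ s : Fin (e + 1), MvPolynomial.X (Sym2.mk (p.2 s) (p.1 s))) ⊗ₜ[ℂ]
      (∏ s : Fin (e + 1), MvPolynomial.X (Sym2.mk (p.2 s) (p.1 (s + 1)))))
    (fun i => rfl)).trans ?_
  rw [Fintype.sum_prod_type]
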